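/- Let M = ([2n], B) be a rank-2 matroid with nonempty thin Schubert cell G_M. If at least two pairs of the form {j, j*} belong to B, then G_M ⊄ H and G_M ∩ H ≠ ∅, where H = {Σ_j x_{j,j*} = 0}; moreover for any x ∈ G_M the intersection of the torus orbit T'·x with H is a hypersurface in T'·x (in particular nonempty and irreducible), where T' = (C*)^{2n} acts by scaling coordinates. -/

import Mathlib

/-- The star involution on `E_n = [2n]`, `i* = 2n - 1 - i` (0-indexed). -/
def nstar (n : ℕ) (i : Fin (2*n)) : Fin (2*n) :=
  ⟨2*n - 1 - (i : ℕ), by have h := i.isLt; omega⟩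

/-- The symplectic linear form `s(x) = Σ_{j=1}^n x_{j,j*}`. -/
noncomputable def sSum (n : ℕ) (x : Fin (2*n) → Fin (2*n) → ℂ) : ℂ :=
  ∑ i ∈ Finset.univ.filter (fun i : Fin (2*n) => (i : ℕ) < n), x i (nstar n i)

/-- Membership in the thin Schubert cell `G_M` for the matroid with bases `B`:
`x` is a Plücker vector (antisymmetric, Plücker relations) with support `B`. -/
def InCell (n : ℕ) (B : Set (Finset (Fin (2*n))))
    (x : Fin (2*n) → Fin (2*n) → ℂ) : Prop :=
  (∀ i j, x j i = - x i j) ∧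
  (∀ a b c d, x a b * x c d - x a c * x b d + x a d * x b c = 0) ∧
  (∀ i j : Fin (2*n), i ≠ j → (x i j ≠ 0 ↔ ({i, j} : Finset (Fin (2*n))) ∈ B))

/-- The restriction of `s` to the torus orbit of `x`, as a Laurent polynomial
in the torus coordinates `λ₁, …, λ_{2n}`: `f = Σ_j x_{j,j*} λ_j λ_{j*}`, an
element of the Laurent polynomial ring `ℂ[λ₁^±, …, λ_{2n}^±]` (modeled as the
group algebra of the character lattice `ℤ^{2n}`). -/
noncomputable def orbitHyp (n : ℕ) (x : Fin (2*n) → Fin (2*n) → ℂ) :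
    AddMonoidAlgebra ℂ (Fin (2*n) → ℤ) :=
  ∑ j ∈ Finset.univ.filter (fun j : Fin (2*n) => (j : ℕ) < n),
    AddMonoidAlgebra.single (fun k => if k = j ∨ k = nstar n j then 1 else 0)
      (x j (nstar n j))

open Polynomial in
lemma lin_prime {D : Type*} [CommRing D] [IsDomain D] {a : D} (ha : IsUnit a) (b : D) :
    Prime (Polynomial.C a * Polynomial.X + Polynomial.C b) := by
  obtain ⟨u, rfl⟩ := ha
  have h : (C (u : D) * X + C b) = C (u : D) * (X - C (-((↑u⁻¹ : D) * b))) := by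
    have h1 : (u : D) * ((↑u⁻¹ : D) * b) = b := by
      rw [← mul_assoc, Units.mul_inv, one_mul]
    rw [mul_sub, ← Polynomial.C_mul, mul_neg, h1, Polynomial.C_neg]; ring
  rw [h]
  exact ((associated_unit_mul_left _ _ (Polynomial.isUnit_C.mpr u.isUnit)).symm).prime
    (Polynomial.prime_X_sub_C _)

open MvPolynomial in
lemma prime_linear {N : ℕ} (b : ℂ) (a : Fin N → ℂ) (F : Finset (Fin N))
    (k : Fin N) (hk : k ∈ F) (hak : a k ≠ 0) :
    Prime (MvPolynomial.C b + ∑ i ∈ F, MvPolynomial.C (a i) * MvPolynomial.X i :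
      MvPolynomial (Fin N) ℂ) := by
  obtain ⟨m, rfl⟩ : ∃ m, N = m + 1 := by
    cases N with
    | zero => exact absurd k.isLt (by omega)
    | succ m => exact ⟨m, rfl⟩
  set e : Fin (m + 1) ≃ Fin (m + 1) := Equiv.swap k 0 with he_def
  have he : e k = 0 := Equiv.swap_apply_left k 0
  set Ψ := (renameEquiv ℂ e).trans (finSuccEquiv ℂ m) with hΨ
  have heq : ∀ i : Fin (m+1), i ≠ k → e i ≠ 0 := by
    intro i hi h0
    exact hi (e.injective (h0.trans he.symm))
  set g : Fin (m+1) → MvPolynomial (Fin m) ℂ := fun i =>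
    if h : e i = 0 then 0 else MvPolynomial.C (a i) * MvPolynomial.X ((e i).pred h) with hg
  have hXk : Ψ (X k) = Polynomial.X := by
    simp [hΨ, he, finSuccEquiv_X_zero]
  have hC : ∀ c : ℂ, Ψ (MvPolynomial.C c) = Polynomial.C (MvPolynomial.C c) := by
    intro c; simp [hΨ, finSuccEquiv_apply]
  have hterm : ∀ i ∈ F.erase k, Ψ (MvPolynomial.C (a i) * X i) = Polynomial.C (g i) := by
    intro i hi
    have hine : i ≠ k := Finset.ne_of_mem_erase hi
    have h0 : e i ≠ 0 := heq i hine
    have hXi : Ψ (X i) = Polynomial.C (X ((e i).pred h0)) := by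
      have hxx : X (e i) = (X (((e i).pred h0).succ) : MvPolynomial (Fin (m+1)) ℂ) := by
        rw [Fin.succ_pred]
      simp only [hΨ, AlgEquiv.trans_apply, renameEquiv_apply, rename_X]
      rw [hxx, finSuccEquiv_X_succ]
    rw [map_mul, hC, hXi]
    simp only [hg]
    rw [dif_neg h0, Polynomial.C_mul]
  have hsplit : (MvPolynomial.C b + ∑ i ∈ F, MvPolynomial.C (a i) * X i :
      MvPolynomial (Fin (m+1)) ℂ)
      = MvPolynomial.C (a k) * X k + (MvPolynomial.C b + ∑ i ∈ F.erase k,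
          MvPolynomial.C (a i) * X i) := by
    rw [← Finset.add_sum_erase F _ hk]; ring
  have hval : Ψ (MvPolynomial.C b + ∑ i ∈ F, MvPolynomial.C (a i) * X i)
      = Polynomial.C (MvPolynomial.C (a k)) * Polynomial.X
        + Polynomial.C (MvPolynomial.C b + ∑ i ∈ F.erase k, g i) := by
    rw [hsplit, map_add, map_mul, hXk, hC, map_add, hC, map_sum,
      Finset.sum_congr rfl hterm,
      ← map_sum (Polynomial.C : MvPolynomial (Fin m) ℂ →+* _) g (F.erase k), ← map_add]
  have key : Prime (Ψ (MvPolynomial.C b + ∑ i ∈ F, MvPolynomial.C (a i) * X i)) := by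
    rw [hval]
    exact lin_prime (IsUnit.map MvPolynomial.C (isUnit_iff_ne_zero.mpr hak)) _
  exact (MulEquiv.prime_iff Ψ.toMulEquiv).mp (by exact key)

namespace OHS

noncomputable def iotah (N : ℕ) : (Fin N →₀ ℕ) →+ (Fin N → ℤ) where
  toFun μ := fun m => (μ m : ℤ)
  map_zero' := by ext m; simp
  map_add' μ ν := by ext m; simp

lemma iotah_inj (N : ℕ) : Function.Injective (iotah N) := by
  intro μ ν h
  ext m
  have := congrFun h m
  simpa [iotah] using this

noncomputable def T (N : ℕ) :
    AddMonoidAlgebra ℂ (Fin N →₀ ℕ) →+* AddMonoidAlgebra ℂ (Fin N → ℤ) :=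
  AddMonoidAlgebra.mapDomainRingHom ℂ (iotah N)

lemma T_single (N : ℕ) (μ : Fin N →₀ ℕ) (c : ℂ) :
    T N (AddMonoidAlgebra.single μ c) = AddMonoidAlgebra.single (iotah N μ) c := by
  simp [T, Finsupp.mapDomain_single]

lemma T_inj (N : ℕ) : Function.Injective (T N) := by
  intro a b h
  exact AddMonoidAlgebra.mapDomain_injective (iotah_inj N) (by simpa [T] using h)

lemma single_unit {N : ℕ} (v : Fin N → ℤ) {c : ℂ} (hc : c ≠ 0) :
    IsUnit (AddMonoidAlgebra.single v c : AddMonoidAlgebra ℂ (Fin N → ℤ)) := by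
  refine IsUnit.of_mul_eq_one (AddMonoidAlgebra.single (-v) c⁻¹) ?_
  rw [AddMonoidAlgebra.single_mul_single, add_neg_cancel, mul_inv_cancel₀ hc,
    ← AddMonoidAlgebra.one_def]

lemma exists_bound {N : ℕ} (s : Finset (Fin N → ℤ)) :
    ∃ μ : Fin N →₀ ℕ, ∀ v ∈ s, ∀ i, 0 ≤ v i + (iotah N μ) i := by
  refine ⟨Finsupp.equivFunOnFinite.symm
    (fun _ => s.sup (fun v => Finset.univ.sup (fun i => (-(v i)).toNat))), ?_⟩
  intro v hv i
  simp only [iotah, AddMonoidHom.coe_mk, ZeroHom.coe_mk,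
    Finsupp.coe_equivFunOnFinite_symm]
  have h1 : (-(v i)).toNat ≤ s.sup (fun v => Finset.univ.sup (fun i => (-(v i)).toNat)) := by
    exact le_trans
      (Finset.le_sup (f := fun i => (-(v i)).toNat) (Finset.mem_univ i))
      (Finset.le_sup (f := fun v : Fin N → ℤ => Finset.univ.sup (fun i => (-(v i)).toNat)) hv)
  have h2 : -(v i) ≤ ((-(v i)).toNat : ℤ) := Int.self_le_toNat _
  have h3 := (Nat.cast_le (α := ℤ)).mpr h1
  linarith

lemma clear {N : ℕ} (a : AddMonoidAlgebra ℂ (Fin N → ℤ)) :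
    ∃ (μ : Fin N →₀ ℕ) (r : AddMonoidAlgebra ℂ (Fin N →₀ ℕ)),
      a * AddMonoidAlgebra.single (iotah N μ) 1 = T N r := by
  classical
  obtain ⟨μ, key⟩ := exists_bound a.coeff.support
  refine ⟨μ, ∑ v ∈ a.coeff.support, AddMonoidAlgebra.single
    (Finsupp.equivFunOnFinite.symm (fun i => (v i + iotah N μ i).toNat)) (a.coeff v), ?_⟩
  rw [map_sum]
  have hterm : ∀ v ∈ a.coeff.support,
      T N (AddMonoidAlgebra.single
          (Finsupp.equivFunOnFinite.symm (fun i => (v i + iotah N μ i).toNat)) (a.coeff v))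
        = AddMonoidAlgebra.single (v + iotah N μ) (a.coeff v) := by
    intro v hv
    rw [T_single]
    congr 1
    funext i
    simp only [iotah, AddMonoidHom.coe_mk, ZeroHom.coe_mk,
      Finsupp.coe_equivFunOnFinite_symm, Pi.add_apply]
    exact Int.toNat_of_nonneg (key v hv i)
  rw [Finset.sum_congr rfl hterm]
  conv_lhs => rw [← AddMonoidAlgebra.sum_coeff_single a]
  rw [Finsupp.sum, Finset.sum_mul]
  refine Finset.sum_congr rfl ?_
  intro v hv
  rw [AddMonoidAlgebra.single_mul_single, mul_one]

end OHS

namespace OHS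

lemma prime_T {N : ℕ} {p : AddMonoidAlgebra ℂ (Fin N →₀ ℕ)} (hp : Prime p)
    (hnd : ∀ μ : Fin N →₀ ℕ, ¬ p ∣ AddMonoidAlgebra.single μ 1) :
    Prime (T N p) := by
  have hMinv : ∀ μ : Fin N →₀ ℕ,
      (AddMonoidAlgebra.single (iotah N μ) 1 : AddMonoidAlgebra ℂ (Fin N → ℤ))
        * AddMonoidAlgebra.single (-(iotah N μ)) 1 = 1 := by
    intro μ
    rw [AddMonoidAlgebra.single_mul_single, add_neg_cancel, mul_one,
      ← AddMonoidAlgebra.one_def]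
  constructor
  · intro h
    exact hp.1 (T_inj N (by rw [h, map_zero]))
  constructor
  · intro h
    obtain ⟨b, hb⟩ := h.exists_right_inv
    obtain ⟨μ, r, hr⟩ := clear b
    have : T N (p * r) = T N (AddMonoidAlgebra.single μ 1) := by
      rw [map_mul, ← hr, T_single, ← mul_assoc, hb, one_mul]
    exact hnd μ ⟨r, (T_inj N this).symm⟩
  · intro a b hab
    obtain ⟨h, hh⟩ := hab
    obtain ⟨μa, ra, hra⟩ := clear a
    obtain ⟨μb, rb, hrb⟩ := clear b
    obtain ⟨μh, rh, hrh⟩ := clear h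
    have hkey : T N (ra * rb * AddMonoidAlgebra.single μh 1)
        = T N (p * rh * (AddMonoidAlgebra.single μa 1 * AddMonoidAlgebra.single μb 1)) := by
      simp only [map_mul, T_single]
      rw [← hra, ← hrb, ← hrh]
      linear_combination (AddMonoidAlgebra.single (iotah N μa) (1:ℂ)
        * AddMonoidAlgebra.single (iotah N μb) (1:ℂ)
        * AddMonoidAlgebra.single (iotah N μh) (1:ℂ)) * hh
    have hfact : ra * rb * AddMonoidAlgebra.single μh 1
        = p * rh * (AddMonoidAlgebra.single μa 1 * AddMonoidAlgebra.single μb 1) :=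
      T_inj N hkey
    have hdvd : p ∣ ra * rb * AddMonoidAlgebra.single μh 1 :=
      ⟨rh * (AddMonoidAlgebra.single μa 1 * AddMonoidAlgebra.single μb 1), by
        rw [hfact]; ring⟩
    rcases hp.2.2 _ _ hdvd with hx | hx
    · rcases hp.2.2 _ _ hx with hy | hy
      · left
        obtain ⟨c, hc⟩ := hy
        refine ⟨T N c * AddMonoidAlgebra.single (-(iotah N μa)) 1, ?_⟩
        have h5 : a * (AddMonoidAlgebra.single (iotah N μa) 1
            * AddMonoidAlgebra.single (-(iotah N μa)) 1)
            = T N p * (T N c * AddMonoidAlgebra.single (-(iotah N μa)) 1) := by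
          rw [← mul_assoc, hra, hc, map_mul]; ring
        rwa [hMinv, mul_one] at h5
      · right
        obtain ⟨c, hc⟩ := hy
        refine ⟨T N c * AddMonoidAlgebra.single (-(iotah N μb)) 1, ?_⟩
        have h5 : b * (AddMonoidAlgebra.single (iotah N μb) 1
            * AddMonoidAlgebra.single (-(iotah N μb)) 1)
            = T N p * (T N c * AddMonoidAlgebra.single (-(iotah N μb)) 1) := by
          rw [← mul_assoc, hrb, hc, map_mul]; ring
        rwa [hMinv, mul_one] at h5
    · exact absurd hx (hnd μh)

end OHS

namespace OHS

lemma nstar_ge {n : ℕ} (i : Fin (2*n)) (hi : (i:ℕ) < n) : n ≤ (nstar n i : ℕ) := by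
  simp only [nstar]; omega

lemma nstar_lt {n : ℕ} (m : Fin (2*n)) (hm : ¬ (m:ℕ) < n) : (nstar n m : ℕ) < n := by
  have := m.isLt; simp only [nstar]; omega

lemma nstar_nstar {n : ℕ} (m : Fin (2*n)) : nstar n (nstar n m) = m := by
  have := m.isLt
  apply Fin.ext
  simp only [nstar]
  omega

lemma nstar_inj {n : ℕ} {i l : Fin (2*n)} (h : nstar n i = nstar n l) : i = l := by
  have := congrArg (nstar n) h
  rwa [nstar_nstar, nstar_nstar] at this

variable (n : ℕ)

/-- the index set `{i : i < n}` -/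
noncomputable def Fn : Finset (Fin (2*n)) :=
  Finset.univ.filter (fun i : Fin (2*n) => (i : ℕ) < n)

lemma mem_Fn {i : Fin (2*n)} : i ∈ Fn n ↔ (i : ℕ) < n := by
  simp [Fn]

variable (j : Fin (2*n))

/-- forward map of the lattice automorphism -/
noncomputable def psiF (v : Fin (2*n) → ℤ) : Fin (2*n) → ℤ := fun m =>
  if (m:ℕ) < n then (if m = j then ∑ i ∈ Fn n, v i else v m)
  else v m - v (nstar n m)

/-- backward map auxiliary -/
noncomputable def psiA (w : Fin (2*n) → ℤ) : Fin (2*n) → ℤ := fun i =>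
  if i = j then w j - ∑ l ∈ (Fn n).erase j, w l else w i

/-- backward map of the lattice automorphism -/
noncomputable def psiG (w : Fin (2*n) → ℤ) : Fin (2*n) → ℤ := fun m =>
  if (m:ℕ) < n then psiA n j w m else w m + psiA n j w (nstar n m)

lemma sum_psiA (hj : (j:ℕ) < n) (w : Fin (2*n) → ℤ) : ∑ i ∈ Fn n, psiA n j w i = w j := by
  have hjF : j ∈ Fn n := (mem_Fn n).mpr hj
  rw [← Finset.add_sum_erase _ _ hjF]
  have h2 : ∀ i ∈ (Fn n).erase j, psiA n j w i = w i := by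
    intro i hi
    rw [psiA, if_neg (Finset.ne_of_mem_erase hi)]
  rw [Finset.sum_congr rfl h2, psiA, if_pos rfl]
  ring

lemma psiFG (hj : (j:ℕ) < n) (w : Fin (2*n) → ℤ) : psiF n j (psiG n j w) = w := by
  funext m
  by_cases hm : (m:ℕ) < n
  · rw [psiF, if_pos hm]
    by_cases hmj : m = j
    · rw [if_pos hmj, hmj]
      have : ∀ i ∈ Fn n, psiG n j w i = psiA n j w i := by
        intro i hi
        rw [psiG, if_pos ((mem_Fn n).mp hi)]
      rw [Finset.sum_congr rfl this, sum_psiA n j hj]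
    · rw [if_neg hmj, psiG, if_pos hm, psiA, if_neg hmj]
  · rw [psiF, if_neg hm, psiG, if_neg hm, psiG, if_pos (nstar_lt m hm)]
    ring

lemma psiGF (hj : (j:ℕ) < n) (v : Fin (2*n) → ℤ) : psiG n j (psiF n j v) = v := by
  have hjF : j ∈ Fn n := (mem_Fn n).mpr hj
  have hA : ∀ i : Fin (2*n), (i:ℕ) < n → psiA n j (psiF n j v) i = v i := by
    intro i hi
    by_cases hij : i = j
    · rw [hij]
      rw [psiA, if_pos rfl, psiF, if_pos hj, if_pos rfl]
      have h2 : ∀ l ∈ (Fn n).erase j, psiF n j v l = v l := by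
        intro l hl
        have hln : (l:ℕ) < n := (mem_Fn n).mp (Finset.mem_of_mem_erase hl)
        rw [psiF, if_pos hln, if_neg (Finset.ne_of_mem_erase hl)]
      rw [Finset.sum_congr rfl h2, ← Finset.add_sum_erase _ _ hjF]
      ring
    · rw [psiA, if_neg hij, psiF, if_pos hi, if_neg hij]
  funext m
  by_cases hm : (m:ℕ) < n
  · rw [psiG, if_pos hm]
    exact hA m hm
  · rw [psiG, if_neg hm, hA _ (nstar_lt m hm), psiF, if_neg hm]
    ring

/-- the lattice automorphism -/
noncomputable def psi (hj : (j:ℕ) < n) : (Fin (2*n) → ℤ) ≃+ (Fin (2*n) → ℤ) where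
  toFun := psiF n j
  invFun := psiG n j
  left_inv := psiGF n j hj
  right_inv := psiFG n j hj
  map_add' u v := by
    funext m
    by_cases hm : (m:ℕ) < n
    · by_cases hmj : m = j
      · simp only [psiF, if_pos hm, if_pos hmj, Pi.add_apply, Finset.sum_add_distrib]
      · simp only [psiF, if_pos hm, if_neg hmj, Pi.add_apply]
    · simp only [psiF, if_neg hm, Pi.add_apply]
      ring

end OHS

namespace OHS

variable (n : ℕ)

noncomputable def chi (i : Fin (2*n)) : Fin (2*n) → ℤ :=
  fun m => if m = i ∨ m = nstar n i then 1 else 0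

lemma fin_ne_of_lt_ge {i l : Fin (2*n)} (h1 : (i:ℕ) < n) (h2 : ¬ (l:ℕ) < n) : l ≠ i := by
  intro h; rw [h] at h2; omega

lemma chi_lt {i l : Fin (2*n)} (hi : (i:ℕ) < n) (hl : (l:ℕ) < n) :
    chi n i l = if l = i then 1 else 0 := by
  have h1 : l ≠ nstar n i := by
    intro h
    have h2 := nstar_ge i hi
    rw [h] at hl
    omega
  simp only [chi]
  by_cases h : l = i
  · rw [if_pos (Or.inl h), if_pos h]
  · rw [if_neg (by tauto), if_neg h]

lemma chi_ge {i l : Fin (2*n)} (hi : (i:ℕ) < n) (hl : ¬ (l:ℕ) < n) :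
    chi n i l = if l = nstar n i then 1 else 0 := by
  have h1 : l ≠ i := fin_ne_of_lt_ge n hi hl
  simp only [chi]
  by_cases h : l = nstar n i
  · rw [if_pos (Or.inr h), if_pos h]
  · rw [if_neg (by tauto), if_neg h]

lemma psi_chi {j i : Fin (2*n)} (hj : (j:ℕ) < n) (hi : (i:ℕ) < n) (hij : i ≠ j) :
    psi n j hj (chi n i - chi n j) = (fun m => if m = i then 1 else 0) := by
  have hcoe : ∀ v, psi n j hj v = psiF n j v := fun _ => rfl
  funext m
  rw [hcoe]
  by_cases hm : (m:ℕ) < n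
  · by_cases hmj : m = j
    · rw [psiF, if_pos hm, if_pos hmj]
      have hterm : ∀ l ∈ Fn n, (chi n i - chi n j) l
          = (if l = i then (1:ℤ) else 0) - (if l = j then 1 else 0) := by
        intro l hl
        have hln := (mem_Fn n).mp hl
        rw [Pi.sub_apply, chi_lt n hi hln, chi_lt n hj hln]
      rw [Finset.sum_congr rfl hterm, Finset.sum_sub_distrib,
        Finset.sum_ite_eq' (Fn n) i (fun _ => (1:ℤ)),
        Finset.sum_ite_eq' (Fn n) j (fun _ => (1:ℤ)),
        if_pos ((mem_Fn n).mpr hi), if_pos ((mem_Fn n).mpr hj)]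
      have : m ≠ i := by rw [hmj]; exact Ne.symm hij
      rw [if_neg this]
      ring
    · rw [psiF, if_pos hm, if_neg hmj, Pi.sub_apply, chi_lt n hi hm, chi_lt n hj hm,
        if_neg hmj]
      ring
  · rw [psiF, if_neg hm, Pi.sub_apply, Pi.sub_apply,
      chi_ge n hi hm, chi_ge n hj hm,
      chi_lt n hi (nstar_lt m hm), chi_lt n hj (nstar_lt m hm)]
    have e1 : (m = nstar n i) ↔ (nstar n m = i) := by
      constructor
      · intro h; rw [h, nstar_nstar]
      · intro h; rw [← h, nstar_nstar]
    have e2 : (m = nstar n j) ↔ (nstar n m = j) := by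
      constructor
      · intro h; rw [h, nstar_nstar]
      · intro h; rw [← h, nstar_nstar]
    have hmi : m ≠ i := fin_ne_of_lt_ge n hi hm
    rw [if_neg hmi, if_congr e1 rfl rfl, if_congr e2 rfl rfl]
    ring

lemma iotah_single {i : Fin (2*n)} :
    iotah (2*n) (Finsupp.single i 1) = (fun m => if m = i then (1:ℤ) else 0) := by
  funext m
  simp only [iotah, AddMonoidHom.coe_mk, ZeroHom.coe_mk, Finsupp.single_apply]
  by_cases h : i = m
  · rw [if_pos h, if_pos h.symm]; rfl
  · rw [if_neg h, if_neg (Ne.symm h)]; rfl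

end OHS

namespace OHS

lemma X_prime (N : ℕ) (i : Fin N) : Prime (MvPolynomial.X i : MvPolynomial (Fin N) ℂ) := by
  have h := prime_linear (0 : ℂ) (fun _ => 1) {i} i (Finset.mem_singleton_self i) one_ne_zero
  simpa using h

lemma orbitHyp_prime (n : ℕ) (x : Fin (2*n) → Fin (2*n) → ℂ) (j k : Fin (2*n))
    (hj : (j:ℕ) < n) (hk : (k:ℕ) < n) (hjk : j ≠ k)
    (haj : x j (nstar n j) ≠ 0) (hak : x k (nstar n k) ≠ 0) :
    Prime (orbitHyp n x) := by
  classical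
  set A : Fin (2*n) → ℂ := fun i => x i (nstar n i) with hA
  have haj' : A j ≠ 0 := haj
  have hak' : A k ≠ 0 := hak
  set pd : Fin (2*n) → (Fin (2*n) →₀ ℕ) :=
    fun i => if i = j then 0 else Finsupp.single i 1 with hpd
  set p : AddMonoidAlgebra ℂ (Fin (2*n) →₀ ℕ) :=
    ∑ i ∈ Fn n, AddMonoidAlgebra.single (pd i) (A i) with hp_def
  have hkj : k ≠ j := Ne.symm hjk
  have hkmem : k ∈ (Fn n).erase j := Finset.mem_erase.mpr ⟨hkj, (mem_Fn n).mpr hk⟩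
  have hjmem : j ∈ Fn n := (mem_Fn n).mpr hj
  have hmon : ∀ i : Fin (2*n), (MvPolynomial.C (A i) * MvPolynomial.X i :
      MvPolynomial (Fin (2*n)) ℂ) = MvPolynomial.monomial (Finsupp.single i 1) (A i) := by
    intro i
    rw [MvPolynomial.X, MvPolynomial.C_mul_monomial, mul_one]
  -- p as an honest linear polynomial
  have hpoly : p = (MvPolynomial.C (A j) + ∑ i ∈ (Fn n).erase j,
      MvPolynomial.C (A i) * MvPolynomial.X i : MvPolynomial (Fin (2*n)) ℂ) := by
    rw [hp_def, ← Finset.add_sum_erase _ _ hjmem]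
    congr 1
    · simp only [hpd]
      rw [if_true]
      exact (MvPolynomial.C_apply).symm
    · refine Finset.sum_congr rfl ?_
      intro i hi
      simp only [hpd]
      rw [if_neg (Finset.ne_of_mem_erase hi), hmon i]
      rfl
  have hp : Prime p := by
    rw [hpoly]
    exact prime_linear (A j) A ((Fn n).erase j) k hkmem hak'
  -- p does not divide monomials
  have hcc : MvPolynomial.constantCoeff (p : MvPolynomial (Fin (2*n)) ℂ) = A j := by
    rw [hpoly, map_add, MvPolynomial.constantCoeff_C, map_sum]
    have hz : ∀ i ∈ (Fn n).erase j,
        MvPolynomial.constantCoeff (MvPolynomial.C (A i) * MvPolynomial.X i) = 0 := by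
      intro i _
      rw [map_mul, MvPolynomial.constantCoeff_X, mul_zero]
    rw [Finset.sum_congr rfl hz, Finset.sum_const_zero, add_zero]
  have hnd : ∀ μ : Fin (2*n) →₀ ℕ, ¬ p ∣ AddMonoidAlgebra.single μ 1 := by
    intro μ hdvd
    have hdvd' : p ∣ (MvPolynomial.monomial μ (1:ℂ)) := by
      rwa [← MvPolynomial.single_eq_monomial]
    rw [MvPolynomial.monomial_eq, MvPolynomial.C_1, one_mul] at hdvd'
    rw [Finsupp.prod] at hdvd'
    rw [hp.dvd_finset_prod_iff] at hdvd'
    obtain ⟨i, _, hdi⟩ := hdvd'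
    have hdX : p ∣ MvPolynomial.X i := hp.dvd_of_dvd_pow hdi
    obtain ⟨c, hc⟩ := hdX
    rcases (X_prime (2*n) i).irreducible.isUnit_or_isUnit hc with hu | hu
    · exact hp.2.1 hu
    · have h0 : MvPolynomial.constantCoeff (MvPolynomial.X i : MvPolynomial (Fin (2*n)) ℂ)
          = A j * MvPolynomial.constantCoeff c := by
        rw [hc, map_mul, hcc]
      rw [MvPolynomial.constantCoeff_X] at h0
      have hcu : IsUnit (MvPolynomial.constantCoeff c) :=
        hu.map MvPolynomial.constantCoeff
      rcases mul_eq_zero.mp h0.symm with h1 | h1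
      · exact haj' h1
      · exact hcu.ne_zero h1
  have hTp : Prime (T (2*n) p) := prime_T hp hnd
  -- transfer back
  set u : AddMonoidAlgebra ℂ (Fin (2*n) → ℤ) :=
    AddMonoidAlgebra.single (-(chi n j)) 1 with hu_def
  have hu : IsUnit u := single_unit _ one_ne_zero
  have horb : orbitHyp n x = ∑ i ∈ Fn n, AddMonoidAlgebra.single (chi n i) (A i) := rfl
  have hf2 : u * orbitHyp n x = ∑ i ∈ Fn n,
      AddMonoidAlgebra.single (chi n i - chi n j) (A i) := by
    rw [horb, Finset.mul_sum]
    refine Finset.sum_congr rfl ?_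
    intro i _
    rw [hu_def, AddMonoidAlgebra.single_mul_single, one_mul, neg_add_eq_sub]
  set Ψ := AddMonoidAlgebra.domCongr ℂ ℂ (psi n j hj) with hΨ
  have hΨval : Ψ (u * orbitHyp n x) = T (2*n) p := by
    rw [hf2, map_sum, hp_def, map_sum]
    refine Finset.sum_congr rfl ?_
    intro i hi
    rw [AddMonoidAlgebra.domCongr_single, T_single]
    congr 1
    by_cases hij : i = j
    · rw [hij, sub_self, map_zero]
      simp only [hpd]
      rw [if_true, map_zero]
    · rw [psi_chi n hj ((mem_Fn n).mp hi) hij]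
      simp only [hpd]
      rw [if_neg hij, iotah_single]
  have hprime2 : Prime (u * orbitHyp n x) := by
    rw [((MulEquiv.prime_iff Ψ.toMulEquiv).symm : Prime (u * orbitHyp n x) ↔ _)]
    show Prime (Ψ (u * orbitHyp n x))
    rw [hΨval]
    exact hTp
  exact (associated_unit_mul_left (orbitHyp n x) u hu).prime hprime2

end OHS

namespace OHS

lemma scale_InCell (n : ℕ) (B : Set (Finset (Fin (2*n)))) (x : Fin (2*n) → Fin (2*n) → ℂ)
    (hx : InCell n B x) (t : Fin (2*n) → ℂ) (ht : ∀ i, t i ≠ 0) :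
    InCell n B (fun i j => t i * t j * x i j) := by
  obtain ⟨h1, h2, h3⟩ := hx
  refine ⟨?_, ?_, ?_⟩
  · intro i j
    simp only
    rw [h1 i j]
    ring
  · intro a b c d
    simp only
    linear_combination (t a * t b * t c * t d) * (h2 a b c d)
  · intro i j hij
    simp only
    rw [← h3 i j hij]
    constructor
    · intro h hx0
      exact h (by rw [hx0]; ring)
    · intro h
      exact mul_ne_zero (mul_ne_zero (ht i) (ht j)) h

noncomputable def tfun (n : ℕ) (j k : Fin (2*n)) (c d : ℂ) : Fin (2*n) → ℂ :=
  fun m => if m = nstar n j then c else if m = nstar n k then d else 1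

lemma tfun_ne (n : ℕ) (j k : Fin (2*n)) {c d : ℂ} (hc : c ≠ 0) (hd : d ≠ 0) :
    ∀ i, tfun n j k c d i ≠ 0 := by
  intro i
  rw [tfun]
  split_ifs <;> simp [hc, hd]

lemma sSum_scale (n : ℕ) (x : Fin (2*n) → Fin (2*n) → ℂ) (j k : Fin (2*n))
    (hj : (j:ℕ) < n) (hk : (k:ℕ) < n) (hjk : j ≠ k) (c d : ℂ) :
    sSum n (fun i l => (tfun n j k c d) i * (tfun n j k c d) l * x i l)
      = c * x j (nstar n j) + d * x k (nstar n k)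
        + ∑ i ∈ ((Fn n).erase j).erase k, x i (nstar n i) := by
  have hkj : k ≠ j := Ne.symm hjk
  have hjmem : j ∈ Fn n := (mem_Fn n).mpr hj
  have hkmem : k ∈ (Fn n).erase j := Finset.mem_erase.mpr ⟨hkj, (mem_Fn n).mpr hk⟩
  have hstart : sSum n (fun i l => (tfun n j k c d) i * (tfun n j k c d) l * x i l)
      = ∑ i ∈ Fn n, (tfun n j k c d) i * (tfun n j k c d) (nstar n i) * x i (nstar n i) := rfl
  rw [hstart]
  have hterm : ∀ i ∈ Fn n, (tfun n j k c d) i * (tfun n j k c d) (nstar n i) * x i (nstar n i)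
      = (if i = j then c else if i = k then d else 1) * x i (nstar n i) := by
    intro i hi
    have hin : (i:ℕ) < n := (mem_Fn n).mp hi
    have hnsj : ¬ ((nstar n j : Fin (2*n)) : ℕ) < n := by
      have := nstar_ge j hj; omega
    have hnsk : ¬ ((nstar n k : Fin (2*n)) : ℕ) < n := by
      have := nstar_ge k hk; omega
    have ht1 : (tfun n j k c d) i = 1 := by
      rw [tfun]
      rw [if_neg (Ne.symm (fin_ne_of_lt_ge n hin hnsj)),
        if_neg (Ne.symm (fin_ne_of_lt_ge n hin hnsk))]
    rw [ht1, one_mul]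
    congr 1
    rw [tfun]
    by_cases hij : i = j
    · rw [if_pos (by rw [hij]), if_pos hij]
    · rw [if_neg (fun h => hij (nstar_inj h))]
      by_cases hik : i = k
      · rw [if_pos (by rw [hik]), if_neg hij, if_pos hik]
      · rw [if_neg (fun h => hik (nstar_inj h)), if_neg hij, if_neg hik]
  rw [Finset.sum_congr rfl hterm, ← Finset.add_sum_erase _ _ hjmem, if_pos rfl,
    ← Finset.add_sum_erase _ _ hkmem, if_neg hkj, if_pos rfl]
  have hrest : ∀ i ∈ ((Fn n).erase j).erase k,
      (if i = j then c else if i = k then d else 1) * x i (nstar n i) = x i (nstar n i) := by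
    intro i hi
    have hik : i ≠ k := Finset.ne_of_mem_erase hi
    have hij : i ≠ j := Finset.ne_of_mem_erase (Finset.mem_of_mem_erase hi)
    rw [if_neg hij, if_neg hik, one_mul]
  rw [Finset.sum_congr rfl hrest]
  ring

end OHS


/-- If at least two pairs `{j,j*}` are bases of a rank-2 matroid `M` with
nonempty thin Schubert cell `G_M`, then `G_M ⊄ H`, `G_M ∩ H ≠ ∅`, and for each
`x ∈ G_M` the intersection `T'x ∩ H` is a hypersurface of the orbit `T'x`
(it is a proper nonempty subset, cut out by the Laurent polynomial `orbitHyp`,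
which is prime — hence the hypersurface is irreducible). -/
theorem orbit_hyperplane_section (n : ℕ) (B : Set (Finset (Fin (2*n))))
    (hB2 : ∃ j k : Fin (2*n), (j : ℕ) < n ∧ (k : ℕ) < n ∧ j ≠ k ∧
      ({j, nstar n j} : Finset (Fin (2*n))) ∈ B ∧
      ({k, nstar n k} : Finset (Fin (2*n))) ∈ B)
    (hne : ∃ x, InCell n B x) :
    (∃ x, InCell n B x ∧ sSum n x ≠ 0) ∧
    (∃ x, InCell n B x ∧ sSum n x = 0) ∧
    (∀ x, InCell n B x →
      ((∃ t : Fin (2*n) → ℂ, (∀ i, t i ≠ 0) ∧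
          sSum n (fun i j => t i * t j * x i j) = 0) ∧
        (∃ t : Fin (2*n) → ℂ, (∀ i, t i ≠ 0) ∧
          sSum n (fun i j => t i * t j * x i j) ≠ 0) ∧
        Prime (orbitHyp n x))) := by
  classical
  obtain ⟨j, k, hj, hk, hjk, hBj, hBk⟩ := hB2
  have hnsj : ¬ ((nstar n j : Fin (2*n)) : ℕ) < n := by
    have := OHS.nstar_ge j hj; omega
  have hnsk : ¬ ((nstar n k : Fin (2*n)) : ℕ) < n := by
    have := OHS.nstar_ge k hk; omega
  have hjs : j ≠ nstar n j := Ne.symm (OHS.fin_ne_of_lt_ge n hj hnsj)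
  have hks : k ≠ nstar n k := Ne.symm (OHS.fin_ne_of_lt_ge n hk hnsk)
  have main : ∀ x, InCell n B x →
      (∃ t : Fin (2*n) → ℂ, (∀ i, t i ≠ 0) ∧
        sSum n (fun i j => t i * t j * x i j) = 0) ∧
      (∃ t : Fin (2*n) → ℂ, (∀ i, t i ≠ 0) ∧
        sSum n (fun i j => t i * t j * x i j) ≠ 0) := by
    intro x hx
    have haj : x j (nstar n j) ≠ 0 := (hx.2.2 j (nstar n j) hjs).mpr hBj
    have hak : x k (nstar n k) ≠ 0 := (hx.2.2 k (nstar n k) hks).mpr hBk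
    set S : ℂ := ∑ i ∈ ((OHS.Fn n).erase j).erase k, x i (nstar n i) with hS
    constructor
    · obtain ⟨c, hc0, hnum⟩ : ∃ c : ℂ, c ≠ 0 ∧ c * x j (nstar n j) + S ≠ 0 := by
        by_cases h : x j (nstar n j) + S = 0
        · exact ⟨2, two_ne_zero, fun h2 => haj (by linear_combination h2 - h)⟩
        · exact ⟨1, one_ne_zero, fun h1 => h (by linear_combination h1)⟩
      refine ⟨OHS.tfun n j k c (-(c * x j (nstar n j) + S) / x k (nstar n k)),
        OHS.tfun_ne n j k hc0 (div_ne_zero (neg_ne_zero.mpr hnum) hak), ?_⟩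
      rw [OHS.sSum_scale n x j k hj hk hjk, ← hS, div_mul_cancel₀ _ hak]
      ring
    · obtain ⟨c, hc0, hval⟩ : ∃ c : ℂ, c ≠ 0 ∧
          c * x j (nstar n j) + 1 * x k (nstar n k) + S ≠ 0 := by
        by_cases h : x j (nstar n j) + x k (nstar n k) + S = 0
        · exact ⟨2, two_ne_zero, fun h2 => haj (by linear_combination h2 - h)⟩
        · exact ⟨1, one_ne_zero, fun h1 => h (by linear_combination h1)⟩
      refine ⟨OHS.tfun n j k c 1, OHS.tfun_ne n j k hc0 one_ne_zero, ?_⟩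
      rw [OHS.sSum_scale n x j k hj hk hjk, ← hS]
      exact hval
  obtain ⟨x0, hx0⟩ := hne
  refine ⟨?_, ?_, ?_⟩
  · obtain ⟨t, ht, hval⟩ := (main x0 hx0).2
    exact ⟨_, OHS.scale_InCell n B x0 hx0 t ht, hval⟩
  · obtain ⟨t, ht, hval⟩ := (main x0 hx0).1
    exact ⟨_, OHS.scale_InCell n B x0 hx0 t ht, hval⟩
  · intro x hx
    have haj : x j (nstar n j) ≠ 0 := (hx.2.2 j (nstar n j) hjs).mpr hBj
    have hak : x k (nstar n k) ≠ 0 := (hx.2.2 k (nstar n k) hks).mpr hBk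
    exact ⟨(main x hx).1, (main x hx).2, OHS.orbitHyp_prime n x j k hj hk hjk haj hak⟩
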